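/- For every nonempty finite sequence k₁, …, k_s of positive integers, if M = A_{k₁}·A_{k₂}·⋯·A_{k_s} and Mᵀ·M = [[d₁, n], [n, d₂]], then n² + 1 = d₁·d₂ and 1 ≤ d₁ ≤ n < d₂. -/

import Mathlib

open Matrix

/-- `A k` is the 2×2 integer matrix with rows `(0, 1)` and `(1, k)`. -/
def genMat (k : ℤ) : Matrix (Fin 2) (Fin 2) ℤ := !![0, 1; 1, k]

lemma genMat_key (l : List ℤ) (hne : l ≠ []) (hpos : ∀ k ∈ l, 0 < k) :
    ∃ a b c d : ℤ, (l.map genMat).prod = !![a, b; c, d] ∧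
      0 ≤ a ∧ a ≤ b ∧ 1 ≤ c ∧ c ≤ d ∧ (a < b ∨ c < d) ∧ (a * d - b * c) ^ 2 = 1 := by
  induction l with
  | nil => exact absurd rfl hne
  | cons k t ih =>
    have hk : 0 < k := hpos k List.mem_cons_self
    cases t with
    | nil =>
      refine ⟨0, 1, 1, k, ?_, by norm_num, by norm_num, by norm_num, hk, Or.inl one_pos, by ring⟩
      simp [genMat]
    | cons k' t' =>
      obtain ⟨a, b, c, d, hprod, ha, hab, hc, hcd, hne', hdet⟩ :=
        ih (by simp) (fun x hx => hpos x (List.mem_cons_of_mem k hx))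
      refine ⟨c, d, a + k * c, b + k * d, ?_, by linarith, hcd, by nlinarith, by nlinarith,
        Or.inr ?_, ?_⟩
      · rw [List.map_cons, List.prod_cons, hprod, genMat, Matrix.mul_fin_two]
        norm_num
      · rcases hne' with h' | h'
        · nlinarith
        · nlinarith
      · have : c * (b + k * d) - d * (a + k * c) = -(a * d - b * c) := by ring
        rw [this, neg_pow, hdet]; norm_num

/-- For every nonempty finite product `M = A_{k₁}·⋯·A_{k_s}` of the
generators with positive parameters, if `Mᵀ·M = [[d₁, n], [n, d₂]]` then
`n² + 1 = d₁·d₂` and `1 ≤ d₁ ≤ n < d₂`. -/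
theorem product_gives_factorisation (l : List ℤ) (hne : l ≠ [])
    (hpos : ∀ k ∈ l, 0 < k) (n d₁ d₂ : ℤ)
    (h : ((l.map genMat).prod)ᵀ * (l.map genMat).prod = !![d₁, n; n, d₂]) :
    n ^ 2 + 1 = d₁ * d₂ ∧ 1 ≤ d₁ ∧ d₁ ≤ n ∧ n < d₂ := by
  obtain ⟨a, b, c, d, hprod, ha, hab, hc, hcd, hne', hdet⟩ := genMat_key l hne hpos
  rw [hprod] at h
  have h' : !![a * a + c * c, a * b + c * d; b * a + d * c, b * b + d * d]
      = !![d₁, n; n, d₂] := by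
    rw [← h]
    rw [show (!![a, b; c, d])ᵀ = !![a, c; b, d] by ext i j; fin_cases i <;> fin_cases j <;> simp,
      Matrix.mul_fin_two]
  have h1 : a * a + c * c = d₁ := congrFun (congrFun h' 0) 0
  have h2 : a * b + c * d = n := congrFun (congrFun h' 0) 1
  have h3 : b * b + d * d = d₂ := congrFun (congrFun h' 1) 1
  refine ⟨?_, by nlinarith, by nlinarith, ?_⟩
  · subst h1 h2 h3; linear_combination -hdet
  · rcases hne' with h' | h' <;> nlinarith
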